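/- Suppose that for some i ∈ I the adjoint L_i* : G_i → H is surjective and the set {y − F_i y : y ∈ G_i} is bounded. Then the relaxed problem has a solution: there exists x ∈ C such that Σ_{j∈I} ω_j ⟪L_j(y − x), F_j(L_j x) − p_j⟫ ≥ 0 for every y ∈ C. -/

import Mathlib

open RealInnerProductSpace Pointwise


lemma nested_nonempty_iInter {E : Type*} [NormedAddCommGroup E] [InnerProductSpace ℝ E]
    [CompleteSpace E] (D : ℕ → Set E) (hne : ∀ n, (D n).Nonempty)
    (hcl : ∀ n, IsClosed (D n)) (hcv : ∀ n, Convex ℝ (D n))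
    (hmono : ∀ n, D (n + 1) ⊆ D n) (hbdd : Bornology.IsBounded (D 0)) :
    (⋂ n, D n).Nonempty := by
  classical
  have hsub : ∀ {n m : ℕ}, n ≤ m → D m ⊆ D n := by
    intro n m h
    induction h with
    | refl => exact fun x hx => hx
    | step h ih => exact fun x hx => ih (hmono _ hx)
  -- minimizers
  have hvx : ∀ n, ∃ v ∈ D n, ∀ w ∈ D n, ‖v‖ ≤ ‖w‖ := by
    intro n
    obtain ⟨v, hv, hmin⟩ := exists_norm_eq_iInf_of_complete_convex (hne n)
      ((hcl n).isComplete) (hcv n) (0 : E)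
    refine ⟨v, hv, fun w hw => ?_⟩
    have h1 : (⨅ w : D n, ‖(0:E) - w‖) ≤ ‖(0:E) - w‖ := by
      apply ciInf_le ⟨0, Set.forall_mem_range.2 fun _ => norm_nonneg _⟩ (⟨w, hw⟩ : D n)
    rw [← hmin] at h1
    simpa using h1
  choose v hv hvmin using hvx
  set δ : ℕ → ℝ := fun n => ‖v n‖ with hδ
  obtain ⟨Bd, hBd⟩ := isBounded_iff_forall_norm_le.1 hbdd
  have hδmono : Monotone δ := by
    intro n m h
    exact hvmin n (v m) (hsub h (hv m))
  have hδbdd : BddAbove (Set.range δ) := by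
    refine ⟨Bd, ?_⟩
    rintro x ⟨n, rfl⟩
    exact hBd _ (hsub (Nat.zero_le n) (hv n))
  have hδtend : Filter.Tendsto δ Filter.atTop (nhds (⨆ n, δ n)) :=
    tendsto_atTop_ciSup hδmono hδbdd
  set d : ℝ := ⨆ n, δ n with hd
  have hδled : ∀ n, δ n ≤ d := fun n => le_ciSup hδbdd n
  have hsqtend : Filter.Tendsto (fun n => δ n ^ 2) Filter.atTop (nhds (d ^ 2)) :=
    hδtend.pow 2
  -- Cauchy
  have hkey : ∀ m n, n ≤ m → ‖v n - v m‖ ^ 2 ≤ 2 * (d ^ 2 - δ n ^ 2) := by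
    intro m n hnm
    have hmid : (1/2 : ℝ) • v n + (1/2 : ℝ) • v m ∈ D n :=
      hcv n (hv n) (hsub hnm (hv m)) (by norm_num) (by norm_num) (by norm_num)
    have h1 : δ n ≤ ‖(1/2 : ℝ) • v n + (1/2 : ℝ) • v m‖ := hvmin n _ hmid
    have h2 : ‖(1/2 : ℝ) • v n + (1/2 : ℝ) • v m‖ = ‖v n + v m‖ / 2 := by
      rw [← smul_add, norm_smul]
      simp [abs_of_nonneg]
      ring
    have hpar := parallelogram_law_with_norm ℝ (v n) (v m)
    have h3 : δ m ≤ d := hδled m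
    have h4 : δ n ≤ δ m := hδmono hnm
    have h5 : 0 ≤ δ n := norm_nonneg _
    have h6 : ‖v n + v m‖ ≥ 2 * δ n := by rw [h2] at h1; linarith
    have h7 : ‖v n + v m‖ ≥ 0 := norm_nonneg _
    have hn : ‖v n‖ = δ n := rfl
    have hm2 : ‖v m‖ = δ m := rfl
    nlinarith [hpar, h6, h7]
  have hcauchy : CauchySeq v := by
    rw [Metric.cauchySeq_iff]
    intro ε hε
    have : ∀ᶠ n in Filter.atTop, d ^ 2 - δ n ^ 2 < ε ^ 2 / 4 := by
      have := hsqtend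
      rw [Metric.tendsto_atTop] at this
      obtain ⟨N, hN⟩ := this (ε ^ 2 / 4) (by positivity)
      refine Filter.eventually_atTop.2 ⟨N, fun n hn => ?_⟩
      have := hN n hn
      rw [Real.dist_eq, abs_lt] at this
      linarith [this.1]
    obtain ⟨N, hN⟩ := Filter.eventually_atTop.1 this
    refine ⟨N, fun m hm n hn => ?_⟩
    rcases le_total n m with h | h
    · have := hkey m n h
      have h2 := hN n hn
      rw [dist_eq_norm]
      have h3 : ‖v n - v m‖ ^ 2 < ε ^ 2 := by nlinarith
      rw [norm_sub_rev]
      nlinarith [norm_nonneg (v n - v m), hε]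
    · have := hkey n m h
      have h2 := hN m hm
      rw [dist_eq_norm]
      have h3 : ‖v m - v n‖ ^ 2 < ε ^ 2 := by nlinarith
      nlinarith [norm_nonneg (v m - v n), hε]
  obtain ⟨x, hx⟩ := cauchySeq_tendsto_of_complete hcauchy
  refine ⟨x, Set.mem_iInter.2 fun n => ?_⟩
  refine (hcl n).mem_of_tendsto hx ?_
  exact Filter.eventually_atTop.2 ⟨n, fun m hm => hsub hm (hv m)⟩


lemma vi_strongly_monotone {E : Type*} [NormedAddCommGroup E] [InnerProductSpace ℝ E]
    [CompleteSpace E] (C : Set E) (hne : C.Nonempty) (hcl : IsClosed C) (hcv : Convex ℝ C)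
    (B : E → E) (ε Λ : ℝ) (hε : 0 < ε)
    (hmono : ∀ x y : E, ⟪B x - B y, x - y⟫ ≥ ε * ‖x - y‖ ^ 2)
    (hlip : ∀ x y : E, ‖B x - B y‖ ≤ Λ * ‖x - y‖) :
    ∃ x ∈ C, ∀ y ∈ C, ⟪B x, y - x⟫ ≥ 0 := by
  classical
  -- metric projection onto C
  have hproj : ∀ u : E, ∃ v, v ∈ C ∧ ∀ w ∈ C, ⟪u - v, w - v⟫ ≤ 0 := by
    intro u
    obtain ⟨v, hv, hmin⟩ := exists_norm_eq_iInf_of_complete_convex hne hcl.isComplete hcv u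
    exact ⟨v, hv, (norm_eq_iInf_iff_real_inner_le_zero hcv hv).1 hmin⟩
  choose P hPmem hPchar using hproj
  have hPne : ∀ a b : E, ‖P a - P b‖ ≤ ‖a - b‖ := by
    intro a b
    have h1 := hPchar a (P b) (hPmem b)
    have h2 := hPchar b (P a) (hPmem a)
    have hsq : ‖P a - P b‖ ^ 2 ≤ ⟪a - b, P a - P b⟫ := by
      have e1 : ⟪a - P a, P b - P a⟫ = -⟪a - P a, P a - P b⟫ := by
        rw [← inner_neg_right]; congr 1; abel
      have e2 : ⟪(a - b) - (P a - P b), P a - P b⟫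
          = ⟪a - P a, P a - P b⟫ - ⟪b - P b, P a - P b⟫ := by
        rw [← inner_sub_left]; congr 1; abel
      have e3 : ⟪(a - b) - (P a - P b), P a - P b⟫
          = ⟪a - b, P a - P b⟫ - ‖P a - P b‖ ^ 2 := by
        rw [inner_sub_left, real_inner_self_eq_norm_sq]
      nlinarith [e1 ▸ h1, h2, e2, e3]
    have := real_inner_le_norm (a - b) (P a - P b)
    nlinarith [norm_nonneg (P a - P b), norm_nonneg (a - b)]
  set Λ₀ : ℝ := max Λ ε with hΛ₀
  have hΛ₀pos : 0 < Λ₀ := lt_of_lt_of_le hε (le_max_right _ _)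
  have hεΛ : ε ≤ Λ₀ := le_max_right _ _
  set γ : ℝ := ε / Λ₀ ^ 2 with hγ
  have hγpos : 0 < γ := by positivity
  set g : E → E := fun x => x - γ • B x with hg
  set k : ℝ := Real.sqrt (1 - ε ^ 2 / Λ₀ ^ 2) with hk
  have hk0 : 0 ≤ 1 - ε ^ 2 / Λ₀ ^ 2 := by
    have : ε ^ 2 ≤ Λ₀ ^ 2 := by nlinarith
    have h2 : ε ^ 2 / Λ₀ ^ 2 ≤ 1 := by
      rw [div_le_one (by positivity)]; exact this
    linarith
  have hklt : k < 1 := by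
    rw [hk]
    have : 1 - ε ^ 2 / Λ₀ ^ 2 < 1 := by
      have : 0 < ε ^ 2 / Λ₀ ^ 2 := by positivity
      linarith
    calc Real.sqrt (1 - ε ^ 2 / Λ₀ ^ 2) < Real.sqrt 1 := by
          exact Real.sqrt_lt_sqrt hk0 (by linarith)
      _ = 1 := Real.sqrt_one
  have hglip : ∀ x y : E, ‖g x - g y‖ ≤ k * ‖x - y‖ := by
    intro x y
    have hexp : ‖g x - g y‖ ^ 2
        = ‖x - y‖ ^ 2 - 2 * γ * ⟪B x - B y, x - y⟫ + γ ^ 2 * ‖B x - B y‖ ^ 2 := by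
      have e : g x - g y = (x - y) - γ • (B x - B y) := by
        simp only [hg, smul_sub]; abel
      rw [e, @norm_sub_sq_real, real_inner_smul_right, norm_smul, real_inner_comm]
      simp [abs_of_nonneg hγpos.le]
      ring
    have h1 : ‖B x - B y‖ ^ 2 ≤ Λ₀ ^ 2 * ‖x - y‖ ^ 2 := by
      have := hlip x y
      have h2 : ‖B x - B y‖ ≤ Λ₀ * ‖x - y‖ :=
        le_trans this (by
          have : 0 ≤ ‖x - y‖ := norm_nonneg _
          nlinarith [le_max_left Λ ε])
      nlinarith [norm_nonneg (B x - B y), norm_nonneg (x - y), hΛ₀pos]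
    have h2 := hmono x y
    have hsq : ‖g x - g y‖ ^ 2 ≤ (1 - ε ^ 2 / Λ₀ ^ 2) * ‖x - y‖ ^ 2 := by
      rw [hexp]
      have hγval : γ ^ 2 * Λ₀ ^ 2 = ε ^ 2 / Λ₀ ^ 2 := by
        rw [hγ]; field_simp <;> ring
      have hγε : 2 * γ * ε = 2 * (ε ^ 2 / Λ₀ ^ 2) := by
        rw [hγ]; field_simp <;> ring
      nlinarith [norm_nonneg (x - y), sq_nonneg γ]
    calc ‖g x - g y‖ = Real.sqrt (‖g x - g y‖ ^ 2) := by
          rw [Real.sqrt_sq (norm_nonneg _)]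
      _ ≤ Real.sqrt ((1 - ε ^ 2 / Λ₀ ^ 2) * ‖x - y‖ ^ 2) := Real.sqrt_le_sqrt hsq
      _ = k * ‖x - y‖ := by
          rw [Real.sqrt_mul hk0, Real.sqrt_sq (norm_nonneg _)]
  set Φ : E → E := fun x => P (g x) with hΦ
  have hΦlip : LipschitzWith ⟨k, Real.sqrt_nonneg _⟩ Φ := by
    apply LipschitzWith.of_dist_le_mul
    intro x y
    simp only [dist_eq_norm, hΦ]
    calc ‖P (g x) - P (g y)‖ ≤ ‖g x - g y‖ := hPne _ _
      _ ≤ k * ‖x - y‖ := hglip x y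
  have hcontr : ContractingWith ⟨k, Real.sqrt_nonneg _⟩ Φ := ⟨by exact_mod_cast hklt, hΦlip⟩
  obtain ⟨x, hfix, -⟩ := hcontr.exists_fixedPoint (0 : E) (edist_ne_top _ _)
  have hxmem : x ∈ C := by
    have : Φ x = x := hfix
    rw [← this]; exact hPmem _
  refine ⟨x, hxmem, fun y hy => ?_⟩
  have hch := hPchar (g x) y hy
  have hPx : P (g x) = x := hfix
  rw [hPx] at hch
  have : g x - x = -(γ • B x) := by simp [hg]
  rw [this, inner_neg_left, real_inner_smul_left] at hch
  have : 0 ≤ γ * ⟪B x, y - x⟫ := by linarith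
  nlinarith [hγpos]


set_option maxHeartbeats 1000000 in
theorem relaxed_has_solution_of_bounded_displacement
    {H : Type*} [NormedAddCommGroup H] [InnerProductSpace ℝ H] [CompleteSpace H]
    {I : Type*} [Fintype I] [Nonempty I]
    (G : I → Type*) [∀ i, NormedAddCommGroup (G i)] [∀ i, InnerProductSpace ℝ (G i)]
    [∀ i, CompleteSpace (G i)]
    (ω : I → ℝ) (hω : ∀ i, ω i ∈ Set.Ioo (0 : ℝ) 1) (hωsum : ∑ i, ω i = 1)
    (C : Set H) (hCne : C.Nonempty) (hCcl : IsClosed C) (hCcv : Convex ℝ C)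
    (p : ∀ i, G i) (L : ∀ i, H →L[ℝ] G i) (hL : ∀ i, L i ≠ 0)
    (F : ∀ i, G i → G i)
    (hF : ∀ i, ∀ u v : G i, ⟪u - v, F i u - F i v⟫ ≥ ‖F i u - F i v‖ ^ 2)
    (i : I) (hadj : Function.Surjective (ContinuousLinearMap.adjoint (L i)))
    (hbdd : Bornology.IsBounded (Set.range fun y : G i => y - F i y)) :
    ∃ x ∈ C, ∀ y ∈ C, (∑ i, ω i * ⟪L i (y - x), F i (L i x) - p i⟫) ≥ 0 := by
  classical
  obtain ⟨x0, hx0⟩ := hCne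
  set A : H → H := fun x => ∑ j, ω j • (ContinuousLinearMap.adjoint (L j)) (F j (L j x) - p j)
    with hA
  -- basic inner product identity
  have hinner : ∀ x z : H, ⟪z, A x⟫ = ∑ j, ω j * ⟪L j z, F j (L j x) - p j⟫ := by
    intro x z
    simp only [hA, inner_sum]
    refine Finset.sum_congr rfl fun j _ => ?_
    rw [real_inner_smul_right, ContinuousLinearMap.adjoint_inner_right]
  -- difference formula
  have hAsub : ∀ x y : H, A x - A y
      = ∑ j, ω j • (ContinuousLinearMap.adjoint (L j)) (F j (L j x) - F j (L j y)) := by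
    intro x y
    simp only [hA]
    rw [← Finset.sum_sub_distrib]
    refine Finset.sum_congr rfl fun j _ => ?_
    rw [← smul_sub, ← map_sub]
    congr 2
    abel
  have hAdiff : ∀ x y : H, ⟪A x - A y, x - y⟫
      = ∑ j, ω j * ⟪F j (L j x) - F j (L j y), L j (x - y)⟫ := by
    intro x y
    rw [hAsub, sum_inner]
    refine Finset.sum_congr rfl fun j _ => ?_
    rw [real_inner_smul_left, ContinuousLinearMap.adjoint_inner_left]
  -- each term is nonnegative
  have htermnn : ∀ (j : I) (x y : H), 0 ≤ ⟪F j (L j x) - F j (L j y), L j (x - y)⟫ := by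
    intro j x y
    have h := hF j (L j x) (L j y)
    have h2 : ⟪F j (L j x) - F j (L j y), L j x - L j y⟫ ≥ 0 := by
      rw [real_inner_comm]
      nlinarith [sq_nonneg ‖F j (L j x) - F j (L j y)‖]
    rwa [← map_sub] at h2
  have hAmono : ∀ x y : H, 0 ≤ ⟪A x - A y, x - y⟫ := by
    intro x y
    rw [hAdiff]
    exact Finset.sum_nonneg fun j _ => mul_nonneg (hω j).1.le (htermnn j x y)
  -- nonexpansiveness of each F j
  have hFne : ∀ (j : I) (u v : G j), ‖F j u - F j v‖ ≤ ‖u - v‖ := by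
    intro j u v
    have h := hF j u v
    have h2 := real_inner_le_norm (u - v) (F j u - F j v)
    nlinarith [norm_nonneg (F j u - F j v), norm_nonneg (u - v)]
  -- Lipschitz constant
  set Λ : ℝ := ∑ j, ω j * ‖L j‖ ^ 2 with hΛ
  have hΛ0 : 0 ≤ Λ :=
    Finset.sum_nonneg fun j _ => mul_nonneg (hω j).1.le (sq_nonneg _)
  have hAlip : ∀ x y : H, ‖A x - A y‖ ≤ Λ * ‖x - y‖ := by
    intro x y
    rw [hAsub, hΛ, Finset.sum_mul]
    refine le_trans (norm_sum_le _ _) (Finset.sum_le_sum fun j _ => ?_)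
    rw [norm_smul, Real.norm_eq_abs, abs_of_nonneg (hω j).1.le]
    have h1 : ‖(ContinuousLinearMap.adjoint (L j)) (F j (L j x) - F j (L j y))‖
        ≤ ‖L j‖ * ‖F j (L j x) - F j (L j y)‖ := by
      have := (ContinuousLinearMap.adjoint (L j)).le_opNorm (F j (L j x) - F j (L j y))
      rwa [ContinuousLinearMap.adjoint.norm_map] at this
    have h2 : ‖F j (L j x) - F j (L j y)‖ ≤ ‖L j‖ * ‖x - y‖ := by
      refine le_trans (hFne j _ _) ?_
      rw [← map_sub]
      exact (L j).le_opNorm _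
    have h3 : 0 ≤ ‖L j‖ := norm_nonneg _
    have h4 : 0 ≤ ‖F j (L j x) - F j (L j y)‖ := norm_nonneg _
    have h5 : ‖(ContinuousLinearMap.adjoint (L j)) (F j (L j x) - F j (L j y))‖
        ≤ ‖L j‖ ^ 2 * ‖x - y‖ := by nlinarith
    calc ω j * ‖(ContinuousLinearMap.adjoint (L j)) (F j (L j x) - F j (L j y))‖
        ≤ ω j * (‖L j‖ ^ 2 * ‖x - y‖) := mul_le_mul_of_nonneg_left h5 (hω j).1.le
      _ = ω j * ‖L j‖ ^ 2 * ‖x - y‖ := by ring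
  have hAcont : Continuous A := by
    have : LipschitzWith (Real.toNNReal Λ) A := by
      apply LipschitzWith.of_dist_le_mul
      intro x y
      simp only [dist_eq_norm]
      calc ‖A x - A y‖ ≤ Λ * ‖x - y‖ := hAlip x y
        _ ≤ Real.toNNReal Λ * ‖x - y‖ := by
            rw [Real.coe_toNNReal Λ hΛ0]
    exact this.continuous
  -- lower bound for L i from surjectivity of the adjoint
  obtain ⟨c', hc'pos, hc'⟩ := ContinuousLinearMap.exists_preimage_norm_le _ hadj
  have hlow : ∀ z : H, ‖z‖ ≤ c' * ‖L i z‖ := by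
    intro z
    obtain ⟨u, hu, hun⟩ := hc' z
    have h1 : ‖z‖ ^ 2 = ⟪u, L i z⟫ := by
      rw [← ContinuousLinearMap.adjoint_inner_left, hu, real_inner_self_eq_norm_sq]
    have h2 : ⟪u, L i z⟫ ≤ ‖u‖ * ‖L i z‖ := real_inner_le_norm _ _
    have h3 : ‖u‖ * ‖L i z‖ ≤ c' * ‖z‖ * ‖L i z‖ :=
      mul_le_mul_of_nonneg_right hun (norm_nonneg _)
    rcases eq_or_lt_of_le (norm_nonneg z) with h | h
    · rw [← h]; positivity
    · have : ‖z‖ ^ 2 ≤ c' * ‖z‖ * ‖L i z‖ := by linarith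
      nlinarith
  -- displacement bound
  obtain ⟨M, hM⟩ := isBounded_iff_forall_norm_le.1 hbdd
  have hM' : ∀ u : G i, ‖u - F i u‖ ≤ M := fun u => hM _ ⟨u, rfl⟩
  have hM0 : 0 ≤ M := le_trans (norm_nonneg _) (hM' 0)
  -- coercivity constants
  set α : ℝ := ω i / c' ^ 2 with hα
  set β : ℝ := ω i * (2 * M * ‖L i‖) with hβ
  have hαpos : 0 < α := div_pos (hω i).1 (by positivity)
  have hβ0 : 0 ≤ β := mul_nonneg (hω i).1.le (by positivity)
  have coer_arith : ∀ s t : ℝ, 0 ≤ s → 0 ≤ t → t ≤ c' * s → s ≤ ‖L i‖ * t →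
      α * t ^ 2 - β * t ≤ ω i * (s ^ 2 - 2 * M * s) := by
    intro s t hs0 ht0 hts hsl
    rw [hα, hβ]
    have hωi := (hω i).1
    have hts2 : t ^ 2 ≤ c' ^ 2 * s ^ 2 := by nlinarith
    have h5 : ω i / c' ^ 2 * t ^ 2 ≤ ω i * s ^ 2 := by
      rw [div_mul_eq_mul_div, div_le_iff₀ (by positivity)]
      nlinarith
    have h6 : ω i * (2 * M * s) ≤ ω i * (2 * M * ‖L i‖) * t := by
      have h6a : 2 * M * s ≤ 2 * M * (‖L i‖ * t) :=
        mul_le_mul_of_nonneg_left hsl (by positivity)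
      nlinarith [mul_le_mul_of_nonneg_left h6a hωi.le]
    linarith
  have hcoer : ∀ x y : H, ⟪A x - A y, x - y⟫ ≥ α * ‖x - y‖ ^ 2 - β * ‖x - y‖ := by
    intro x y
    have h1 : ⟪A x - A y, x - y⟫ ≥ ω i * ⟪F i (L i x) - F i (L i y), L i (x - y)⟫ := by
      rw [hAdiff]
      exact Finset.single_le_sum
        (fun j _ => mul_nonneg (hω j).1.le (htermnn j x y)) (Finset.mem_univ i)
    have huv : L i x - L i y = L i (x - y) := (map_sub _ _ _).symm
    have h2 : ⟪F i (L i x) - F i (L i y), L i (x - y)⟫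
        ≥ ‖L i (x - y)‖ ^ 2 - 2 * M * ‖L i (x - y)‖ := by
      have e : F i (L i x) - F i (L i y) = (L i x - L i y)
          - ((L i x - F i (L i x)) - (L i y - F i (L i y))) := by abel
      rw [e, huv, inner_sub_left, real_inner_self_eq_norm_sq]
      have hb : ⟪(L i x - F i (L i x)) - (L i y - F i (L i y)), L i (x - y)⟫
          ≤ 2 * M * ‖L i (x - y)‖ := by
        calc ⟪(L i x - F i (L i x)) - (L i y - F i (L i y)), L i (x - y)⟫
            ≤ ‖(L i x - F i (L i x)) - (L i y - F i (L i y))‖ * ‖L i (x - y)‖ :=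
              real_inner_le_norm _ _
          _ ≤ (‖L i x - F i (L i x)‖ + ‖L i y - F i (L i y)‖) * ‖L i (x - y)‖ :=
              mul_le_mul_of_nonneg_right (norm_sub_le _ _) (norm_nonneg _)
          _ ≤ 2 * M * ‖L i (x - y)‖ := by
              have := hM' (L i x); have := hM' (L i y)
              nlinarith [norm_nonneg (L i (x - y))]
      linarith
    have h3 := coer_arith (‖L i (x - y)‖) (‖x - y‖) (norm_nonneg _) (norm_nonneg _)
      (hlow (x - y)) ((L i).le_opNorm _)
    have h4 : ω i * (‖L i (x - y)‖ ^ 2 - 2 * M * ‖L i (x - y)‖)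
        ≤ ω i * ⟪F i (L i x) - F i (L i y), L i (x - y)⟫ :=
      mul_le_mul_of_nonneg_left h2 (hω i).1.le
    linarith
  set R : ℝ := (β + ‖A x0‖ + ‖x0‖) / α with hR
  have hR0 : 0 ≤ R := by
    apply div_nonneg _ hαpos.le
    positivity
  -- perturbed problems
  have hsol : ∀ n : ℕ, ∃ x, x ∈ C ∧
      (∀ y ∈ C, ⟪A x + (1 / ((n : ℝ) + 1)) • x, y - x⟫ ≥ 0) ∧ ‖x - x0‖ ≤ R := by
    intro n
    set ε : ℝ := 1 / ((n : ℝ) + 1) with hε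
    have hεpos : 0 < ε := by positivity
    have hεle : ε ≤ 1 := by
      rw [hε, div_le_one (by positivity)]
      simp [Nat.cast_nonneg]
    set B : H → H := fun x => A x + ε • x with hB
    have hBsub : ∀ x y : H, B x - B y = (A x - A y) + ε • (x - y) := by
      intro x y; simp only [hB, smul_sub]; abel
    have hBmono : ∀ x y : H, ⟪B x - B y, x - y⟫ ≥ ε * ‖x - y‖ ^ 2 := by
      intro x y
      rw [hBsub, inner_add_left, real_inner_smul_left, real_inner_self_eq_norm_sq]
      have := hAmono x y
      linarith
    have hBlip : ∀ x y : H, ‖B x - B y‖ ≤ (Λ + 1) * ‖x - y‖ := by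
      intro x y
      rw [hBsub]
      calc ‖(A x - A y) + ε • (x - y)‖ ≤ ‖A x - A y‖ + ‖ε • (x - y)‖ := norm_add_le _ _
        _ ≤ Λ * ‖x - y‖ + ε * ‖x - y‖ := by
            rw [norm_smul, Real.norm_eq_abs, abs_of_nonneg hεpos.le]
            exact add_le_add_left (hAlip x y) _
        _ ≤ (Λ + 1) * ‖x - y‖ := by nlinarith [norm_nonneg (x - y)]
    obtain ⟨x, hxC, hVI⟩ := vi_strongly_monotone C ⟨x0, hx0⟩ hCcl hCcv B ε (Λ + 1)
      hεpos hBmono hBlip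
    refine ⟨x, hxC, fun y hy => hVI y hy, ?_⟩
    -- uniform bound
    have hb := hVI x0 hx0
    simp only [hB] at hb
    rw [inner_add_left, real_inner_smul_left] at hb
    set t : ℝ := ‖x - x0‖ with htdef
    have ht0 : 0 ≤ t := norm_nonneg _
    have e1 : ⟪A x, x0 - x⟫ = -(⟪A x - A x0, x - x0⟫ + ⟪A x0, x - x0⟫) := by
      rw [← inner_add_left, sub_add_cancel, ← inner_neg_right]
      congr 1; abel
    have e2 : ⟪x, x0 - x⟫ = -(⟪x - x0, x - x0⟫ + ⟪x0, x - x0⟫) := by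
      rw [← inner_add_left, sub_add_cancel, ← inner_neg_right]
      congr 1; abel
    have b1 : ⟪A x - A x0, x - x0⟫ ≥ α * t ^ 2 - β * t := hcoer x x0
    have b2 : ⟪A x0, x - x0⟫ ≥ -(‖A x0‖ * t) := by
      have := abs_real_inner_le_norm (A x0) (x - x0)
      rw [abs_le] at this
      linarith [this.1]
    have b3 : ⟪x0, x - x0⟫ ≥ -(‖x0‖ * t) := by
      have := abs_real_inner_le_norm x0 (x - x0)
      rw [abs_le] at this
      linarith [this.1]
    have b4 : ⟪x - x0, x - x0⟫ = t ^ 2 := real_inner_self_eq_norm_sq _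
    have hquad : α * t ^ 2 ≤ (β + ‖A x0‖ + ‖x0‖) * t := by
      rw [e1, e2, b4, mul_neg] at hb
      have c1 : ε * (t ^ 2 - ‖x0‖ * t) ≤ ε * (t ^ 2 + ⟪x0, x - x0⟫) := by
        apply mul_le_mul_of_nonneg_left _ hεpos.le
        linarith
      have c2 : -(‖x0‖ * t) ≤ ε * (t ^ 2 - ‖x0‖ * t) := by
        nlinarith [mul_nonneg hεpos.le (sq_nonneg t),
          mul_nonneg (sub_nonneg.2 hεle) (mul_nonneg (norm_nonneg x0) ht0)]
      linarith
    rcases eq_or_lt_of_le ht0 with h | h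
    · rw [← h]; exact hR0
    · rw [hR, le_div_iff₀ hαpos]
      nlinarith
  choose xs hxsC hxsVI hxsB using hsol
  -- the nested family
  set K : H → ℝ := fun y => (‖x0‖ + R) * (‖y - x0‖ + R) with hK
  have hK0 : ∀ y, 0 ≤ K y := fun y =>
    mul_nonneg (add_nonneg (norm_nonneg _) hR0) (add_nonneg (norm_nonneg _) hR0)
  set D : ℕ → Set H := fun n => C ∩ Metric.closedBall x0 R ∩
    ⋂ y ∈ C, {x : H | -((1 / ((n : ℝ) + 1)) * K y) ≤ ⟪A y, y - x⟫} with hD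
  have hmemD : ∀ (n : ℕ) (x : H), x ∈ D n ↔ x ∈ C ∧ ‖x - x0‖ ≤ R ∧
      ∀ y ∈ C, -((1 / ((n : ℝ) + 1)) * K y) ≤ ⟪A y, y - x⟫ := by
    intro n x
    simp only [hD, Set.mem_inter_iff, Metric.mem_closedBall, dist_eq_norm,
      Set.mem_iInter, Set.mem_setOf_eq, and_assoc]
  have hDne : ∀ n, (D n).Nonempty := by
    intro n
    refine ⟨xs n, (hmemD n (xs n)).2 ⟨hxsC n, hxsB n, fun y hy => ?_⟩⟩
    set ε : ℝ := 1 / ((n : ℝ) + 1) with hε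
    have hεpos : 0 < ε := by positivity
    have h1 : ⟪A y - A (xs n), y - xs n⟫ ≥ 0 := hAmono y (xs n)
    have h2 := hxsVI n y hy
    rw [inner_add_left, real_inner_smul_left] at h2
    have h3 : ⟪A y, y - xs n⟫ = ⟪A y - A (xs n), y - xs n⟫ + ⟪A (xs n), y - xs n⟫ := by
      rw [← inner_add_left, sub_add_cancel]
    have h4 : ⟪xs n, y - xs n⟫ ≥ -(‖xs n‖ * ‖y - xs n‖) := by
      have := abs_real_inner_le_norm (xs n) (y - xs n)
      rw [abs_le] at this
      linarith [this.1]
    have h5 : ‖xs n‖ ≤ ‖x0‖ + R := by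
      calc ‖xs n‖ = ‖(xs n - x0) + x0‖ := by rw [sub_add_cancel]
        _ ≤ ‖xs n - x0‖ + ‖x0‖ := norm_add_le _ _
        _ ≤ ‖x0‖ + R := by linarith [hxsB n]
    have h6 : ‖y - xs n‖ ≤ ‖y - x0‖ + R := by
      calc ‖y - xs n‖ = ‖(y - x0) - (xs n - x0)‖ := by rw [sub_sub_sub_cancel_right]
        _ ≤ ‖y - x0‖ + ‖xs n - x0‖ := norm_sub_le _ _
        _ ≤ ‖y - x0‖ + R := by linarith [hxsB n]
    have h7 : ‖xs n‖ * ‖y - xs n‖ ≤ K y := by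
      rw [hK]
      exact mul_le_mul h5 h6 (norm_nonneg _) (add_nonneg (norm_nonneg _) hR0)
    rw [← hε] at h2
    have h4' : ⟪xs n, y - xs n⟫ ≤ ‖xs n‖ * ‖y - xs n‖ := real_inner_le_norm _ _
    have m1 : ε * ⟪xs n, y - xs n⟫ ≤ ε * K y :=
      mul_le_mul_of_nonneg_left (le_trans h4' h7) hεpos.le
    linarith
  have hDcl : ∀ n, IsClosed (D n) := by
    intro n
    refine ((hCcl.inter Metric.isClosed_closedBall).inter ?_)
    refine isClosed_biInter fun y hy => ?_
    exact isClosed_le continuous_const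
      (Continuous.inner continuous_const (continuous_const.sub continuous_id))
  have hDcv : ∀ n, Convex ℝ (D n) := by
    intro n
    refine (hCcv.inter (convex_closedBall x0 R)).inter ?_
    refine convex_iInter fun y => convex_iInter fun hy => ?_
    intro x1 hx1 x2 hx2 a b ha hb hab
    simp only [Set.mem_setOf_eq] at hx1 hx2 ⊢
    have e : ⟪A y, y - (a • x1 + b • x2)⟫
        = a * ⟪A y, y - x1⟫ + b * ⟪A y, y - x2⟫ := by
      simp only [inner_sub_right, inner_add_right, real_inner_smul_right]
      linear_combination (⟪A y, y⟫ : ℝ) * hab.symm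
    rw [e]
    calc -((1 / ((n : ℝ) + 1)) * K y)
        = a * (-((1 / ((n : ℝ) + 1)) * K y)) + b * (-((1 / ((n : ℝ) + 1)) * K y)) := by
          rw [← add_mul, hab]; ring
      _ ≤ a * ⟪A y, y - x1⟫ + b * ⟪A y, y - x2⟫ :=
          add_le_add (mul_le_mul_of_nonneg_left hx1 ha) (mul_le_mul_of_nonneg_left hx2 hb)
  have hDmono : ∀ n, D (n + 1) ⊆ D n := by
    intro n x hx
    rw [hmemD] at hx ⊢
    refine ⟨hx.1, hx.2.1, fun y hy => ?_⟩
    refine le_trans ?_ (hx.2.2 y hy)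
    have h1 : (1 : ℝ) / ((n : ℝ) + 1 + 1) ≤ 1 / ((n : ℝ) + 1) := by
      apply one_div_le_one_div_of_le (by positivity)
      linarith
    have := hK0 y
    push_cast
    nlinarith
  have hDbdd : Bornology.IsBounded (D 0) := by
    apply (Metric.isBounded_closedBall (x := x0) (r := R)).subset
    intro x hx
    exact hx.1.2
  obtain ⟨xb, hxb⟩ := nested_nonempty_iInter D hDne hDcl hDcv hDmono hDbdd
  have hxbn : ∀ n, xb ∈ D n := Set.mem_iInter.1 hxb
  have hxbC : xb ∈ C := ((hmemD 0 xb).1 (hxbn 0)).1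
  -- Minty: dual inequalities hold exactly in the limit
  have hdual : ∀ y ∈ C, 0 ≤ ⟪A y, y - xb⟫ := by
    intro y hy
    have hyn : ∀ n : ℕ, -((1 / ((n : ℝ) + 1)) * K y) ≤ ⟪A y, y - xb⟫ := fun n =>
      ((hmemD n xb).1 (hxbn n)).2.2 y hy
    have htend : Filter.Tendsto (fun n : ℕ => -((1 / ((n : ℝ) + 1)) * K y))
        Filter.atTop (nhds 0) := by
      have := (tendsto_one_div_add_atTop_nhds_zero_nat.mul_const (K y)).neg
      simpa using this
    exact le_of_tendsto htend (Filter.Eventually.of_forall hyn)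
  -- Minty's trick to recover the primal inequality
  have hprimal : ∀ y ∈ C, 0 ≤ ⟪A xb, y - xb⟫ := by
    intro y hy
    set z : ℕ → H := fun n => xb + (1 / ((n : ℝ) + 1)) • (y - xb) with hz
    have hzC : ∀ n, z n ∈ C := by
      intro n
      have ht0 : (0 : ℝ) < 1 / ((n : ℝ) + 1) := by positivity
      have ht1 : (1 : ℝ) / ((n : ℝ) + 1) ≤ 1 := by
        rw [div_le_one (by positivity)]; simp [Nat.cast_nonneg]
      have e : z n = (1 - 1 / ((n : ℝ) + 1)) • xb + (1 / ((n : ℝ) + 1)) • y := by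
        simp only [hz, smul_sub, sub_smul, one_smul]
        abel
      rw [e]
      exact hCcv hxbC hy (by linarith) ht0.le (by ring)
    have hposn : ∀ n, 0 ≤ ⟪A (z n), y - xb⟫ := by
      intro n
      have h := hdual (z n) (hzC n)
      have e : z n - xb = (1 / ((n : ℝ) + 1)) • (y - xb) := by
        simp only [hz]; abel
      rw [e, real_inner_smul_right] at h
      have ht0 : (0 : ℝ) < 1 / ((n : ℝ) + 1) := by positivity
      nlinarith
    have hztend : Filter.Tendsto z Filter.atTop (nhds xb) := by
      have h1 : Filter.Tendsto (fun n : ℕ => (1 / ((n : ℝ) + 1)) • (y - xb))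
          Filter.atTop (nhds ((0 : ℝ) • (y - xb))) :=
        tendsto_one_div_add_atTop_nhds_zero_nat.smul_const (y - xb)
      have h2 : Filter.Tendsto (fun n : ℕ => xb + (1 / ((n : ℝ) + 1)) • (y - xb))
          Filter.atTop (nhds (xb + (0 : ℝ) • (y - xb))) := h1.const_add xb
      simp only [zero_smul, add_zero] at h2
      exact h2
    have hintend : Filter.Tendsto (fun n => ⟪A (z n), y - xb⟫) Filter.atTop
        (nhds ⟪A xb, y - xb⟫) :=
      Filter.Tendsto.inner ((hAcont.tendsto xb).comp hztend) tendsto_const_nhds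
    exact ge_of_tendsto hintend (Filter.Eventually.of_forall hposn)
  refine ⟨xb, hxbC, fun y hy => ?_⟩
  have h := hprimal y hy
  rw [real_inner_comm, hinner xb (y - xb)] at h
  exact h
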